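/- Let h : ℝ → ℝ be twice differentiable and p₁, p₂ > 0. If h(0) ≥ 0, ḣ(0) + p₁h(0) ≥ 0, and ḧ(t) + (p₁ + p₂)ḣ(t) + p₁p₂h(t) ≥ 0 for all t ≥ 0, then h(t) ≥ 0 for all t ≥ 0. -/

import Mathlib

lemma first_order_comparison (f : ℝ → ℝ) (p : ℝ)
    (hf : Differentiable ℝ f) (h0 : f 0 ≥ 0)
    (hc : ∀ t : ℝ, 0 ≤ t → deriv f t + p * f t ≥ 0) :
    ∀ t : ℝ, 0 ≤ t → f t ≥ 0 := by
  set g : ℝ → ℝ := fun t => Real.exp (p * t) * f t with hg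
  have hgd : Differentiable ℝ g := by
    exact Differentiable.mul (by fun_prop) hf
  have hderiv : ∀ t : ℝ, deriv g t = Real.exp (p * t) * (deriv f t + p * f t) := by
    intro t
    have h1 : HasDerivAt (fun t : ℝ => Real.exp (p * t)) (p * Real.exp (p * t)) t := by
      have := (Real.hasDerivAt_exp (p * t)).comp t ((hasDerivAt_id t).const_mul p)
      exact this.congr_deriv (by ring)
    have h2 : HasDerivAt f (deriv f t) t := (hf t).hasDerivAt
    have := h1.mul h2
    rw [show deriv g t = _ from this.deriv]
    ring
  have hmono : MonotoneOn g (Set.Ici (0 : ℝ)) := by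
    apply monotoneOn_of_deriv_nonneg (convex_Ici 0) hgd.continuous.continuousOn
      (fun x _ => (hgd x).differentiableWithinAt)
    intro x hx
    rw [interior_Ici] at hx
    rw [hderiv]
    exact mul_nonneg (Real.exp_nonneg _) (hc x hx.le)
  intro t ht
  have := hmono (Set.self_mem_Ici) (Set.mem_Ici.mpr ht) ht
  have hg0 : g 0 = f 0 := by simp [hg]
  have : 0 ≤ g t := by rw [hg0] at this; exact le_trans (by linarith) this
  have hexp : 0 < Real.exp (p * t) := Real.exp_pos _
  have hgt : g t = Real.exp (p*t) * f t := rfl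
  nlinarith [this, hgt]

theorem second_order_ecbf_invariance
    (h : ℝ → ℝ) (p₁ p₂ : ℝ)
    (hdiff : Differentiable ℝ h) (hdiff' : Differentiable ℝ (deriv h))
    (hp₁ : 0 < p₁) (hp₂ : 0 < p₂)
    (h0 : h 0 ≥ 0) (h1 : deriv h 0 + p₁ * h 0 ≥ 0)
    (hcond : ∀ t : ℝ, 0 ≤ t →
      deriv (deriv h) t + (p₁ + p₂) * deriv h t + p₁ * p₂ * h t ≥ 0) :
    ∀ t : ℝ, 0 ≤ t → h t ≥ 0 := by
  set ν : ℝ → ℝ := fun t => deriv h t + p₁ * h t with hν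
  have hνd : Differentiable ℝ ν := hdiff'.add (hdiff.const_mul p₁)
  have hνderiv : ∀ t : ℝ, deriv ν t = deriv (deriv h) t + p₁ * deriv h t := by
    intro t
    have := ((hdiff' t).hasDerivAt.add (((hdiff t).hasDerivAt).const_mul p₁))
    exact this.deriv
  have hν0 : ∀ t : ℝ, 0 ≤ t → ν t ≥ 0 := by
    apply first_order_comparison ν p₂ hνd h1
    intro t ht
    rw [hνderiv]
    have := hcond t ht
    simp only [hν]
    nlinarith
  apply first_order_comparison h p₁ hdiff h0
  intro t ht
  exact hν0 t ht
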